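/- arXiv:0911.2901 — 2 statements merged into one kernel-verified Lean document; each statement's English description precedes it below -/
import Mathlib

section
/- Let 1 ≤ i < j ≤ n and let a, t₁, t₂ ∈ K be nonzero. Then w_{L_i+L_j}(a,0) · w_{L_i-L_j}(t₁,t₂) · w_{L_i+L_j}(a,0)⁻¹ = w_{−2L_j}(−a⁻¹t₁) · w_{2L_i}(a t₂). -/
open Matrix

noncomputable section

/- Throughout, `K` is ℝ or ℂ, encoded by the `RCLike` class. -/

/-- 2n×2n matrices over K. -/
abbrev MK (n : ℕ) (K : Type) [RCLike K] : Type := Matrix (Fin (2 * n)) (Fin (2 * n)) K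

/-- `EK n K k l` is the elementary matrix with (k,l) entry 1 and all other entries 0. -/
def EK (n : ℕ) (K : Type) [RCLike K] (k l : Fin (2 * n)) : MK n K :=
  Matrix.single k l 1

/-- the index `i` (1 ≤ i ≤ n, 0-based) inside {1,…,2n}. -/
def lo {n : ℕ} (i : Fin n) : Fin (2 * n) := ⟨i.1, by have := i.isLt; omega⟩

/-- the index `i + n` (1 ≤ i ≤ n, 0-based) inside {1,…,2n}. -/
def hi {n : ℕ} (i : Fin n) : Fin (2 * n) := ⟨n + i.1, by have := i.isLt; omega⟩

/-- x_{L_i-L_j}(t₁,t₂) = I + (t₁ e_{i,j} + t₂ e_{j+n,i+n}),  i ≠ j. -/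
def xpm (n : ℕ) (K : Type) [RCLike K] (i j : Fin n) (t₁ t₂ : K) : MK n K :=
  1 + (t₁ • EK n K (lo i) (lo j) + t₂ • EK n K (hi j) (hi i))

/-- x_{L_i+L_j}(t₁,t₂) = I + (t₁ e_{i,j+n} + t₂ e_{j,i+n}),  i < j. -/
def xpp (n : ℕ) (K : Type) [RCLike K] (i j : Fin n) (t₁ t₂ : K) : MK n K :=
  1 + (t₁ • EK n K (lo i) (hi j) + t₂ • EK n K (lo j) (hi i))

/-- x_{-L_i-L_j}(t₁,t₂) = I + (t₁ e_{j+n,i} + t₂ e_{i+n,j}),  i < j. -/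
def xmm (n : ℕ) (K : Type) [RCLike K] (i j : Fin n) (t₁ t₂ : K) : MK n K :=
  1 + (t₁ • EK n K (hi j) (lo i) + t₂ • EK n K (hi i) (lo j))

/-- x_{2L_i}(t) = I + t e_{i,i+n}. -/
def x2 (n : ℕ) (K : Type) [RCLike K] (i : Fin n) (t : K) : MK n K :=
  1 + t • EK n K (lo i) (hi i)

/-- x_{-2L_i}(t) = I + t e_{i+n,i}. -/
def xm2 (n : ℕ) (K : Type) [RCLike K] (i : Fin n) (t : K) : MK n K :=
  1 + t • EK n K (hi i) (lo i)

/-- w_{L_i-L_j}(t₁,t₂) = x_{L_i-L_j}(t₁,t₂) x_{L_j-L_i}(-t₁⁻¹,-t₂⁻¹) x_{L_i-L_j}(t₁,t₂).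
(Since 0⁻¹ = 0 in Lean, the degenerate forms w(t,0) and w(0,t) are special cases.) -/
def wpm (n : ℕ) (K : Type) [RCLike K] (i j : Fin n) (t₁ t₂ : K) : MK n K :=
  xpm n K i j t₁ t₂ * xpm n K j i (-t₁⁻¹) (-t₂⁻¹) * xpm n K i j t₁ t₂

/-- w_{L_i+L_j}(t₁,t₂). -/
def wpp (n : ℕ) (K : Type) [RCLike K] (i j : Fin n) (t₁ t₂ : K) : MK n K :=
  xpp n K i j t₁ t₂ * xmm n K i j (-t₁⁻¹) (-t₂⁻¹) * xpp n K i j t₁ t₂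

/-- w_{-L_i-L_j}(t₁,t₂). -/
def wmm (n : ℕ) (K : Type) [RCLike K] (i j : Fin n) (t₁ t₂ : K) : MK n K :=
  xmm n K i j t₁ t₂ * xpp n K i j (-t₁⁻¹) (-t₂⁻¹) * xmm n K i j t₁ t₂

/-- w_{2L_i}(t) = x_{2L_i}(t) x_{-2L_i}(-t⁻¹) x_{2L_i}(t). -/
def w2 (n : ℕ) (K : Type) [RCLike K] (i : Fin n) (t : K) : MK n K :=
  x2 n K i t * xm2 n K i (-t⁻¹) * x2 n K i t

/-- w_{-2L_i}(t) = x_{-2L_i}(t) x_{2L_i}(-t⁻¹) x_{-2L_i}(t). -/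
def wm2 (n : ℕ) (K : Type) [RCLike K] (i : Fin n) (t : K) : MK n K :=
  xm2 n K i t * x2 n K i (-t⁻¹) * xm2 n K i t


lemma lo_ne_hi {n : ℕ} (i j : Fin n) : lo i ≠ hi j := by
  simp only [lo, hi, Ne, Fin.ext_iff, Fin.val_mk]; have := i.isLt; omega

lemma hi_ne_lo {n : ℕ} (i j : Fin n) : hi i ≠ lo j := (lo_ne_hi j i).symm

lemma lo_ne_lo {n : ℕ} {i j : Fin n} (h : i ≠ j) : lo i ≠ lo j := by
  simp only [lo, Ne, Fin.ext_iff, Fin.val_mk]; exact Fin.val_ne_of_ne h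

lemma hi_ne_hi {n : ℕ} {i j : Fin n} (h : i ≠ j) : hi i ≠ hi j := by
  simp only [hi, Ne, Fin.ext_iff, Fin.val_mk]
  have := Fin.val_ne_of_ne h; omega

lemma wpp_eq (n : ℕ) (K : Type) [RCLike K] (i j : Fin n) (a : K) (ha : a ≠ 0) :
    wpp n K i j a 0 = 1 - EK n K (lo i) (lo i) - EK n K (hi j) (hi j)
      + a • EK n K (lo i) (hi j) - a⁻¹ • EK n K (hi j) (lo i) := by
  unfold wpp xpp xmm EK
  simp only [_root_.inv_zero, neg_zero, zero_smul, add_zero, mul_add, add_mul, one_mul, mul_one,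
    smul_mul_assoc, mul_smul_comm, smul_smul, smul_add,
    Matrix.single_mul_single_same, Matrix.single_mul_single_of_ne,
    lo_ne_hi, hi_ne_lo, ne_eq, not_false_eq_true,
    smul_zero, mul_zero, zero_mul, one_smul]
  match_scalars <;> field_simp <;> ring

lemma wpm_eq (n : ℕ) (K : Type) [RCLike K] (i j : Fin n) (hij : i ≠ j) (t₁ t₂ : K)
    (ht₁ : t₁ ≠ 0) (ht₂ : t₂ ≠ 0) :
    wpm n K i j t₁ t₂ = 1 - EK n K (lo i) (lo i) - EK n K (lo j) (lo j)
      - EK n K (hi i) (hi i) - EK n K (hi j) (hi j)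
      + t₁ • EK n K (lo i) (lo j) - t₁⁻¹ • EK n K (lo j) (lo i)
      + t₂ • EK n K (hi j) (hi i) - t₂⁻¹ • EK n K (hi i) (hi j) := by
  have h1 := lo_ne_lo hij
  have h2 := lo_ne_lo hij.symm
  have h3 := hi_ne_hi hij
  have h4 := hi_ne_hi hij.symm
  unfold wpm xpm EK
  simp only [mul_add, add_mul, one_mul, mul_one,
    smul_mul_assoc, mul_smul_comm, smul_smul, smul_add,
    Matrix.single_mul_single_same, Matrix.single_mul_single_of_ne,
    lo_ne_hi, hi_ne_lo, h1, h2, h3, h4, ne_eq, not_false_eq_true,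
    smul_zero, mul_zero, zero_mul, one_smul]
  match_scalars <;> field_simp <;> ring

lemma w2_eq (n : ℕ) (K : Type) [RCLike K] (i : Fin n) (t : K) (ht : t ≠ 0) :
    w2 n K i t = 1 - EK n K (lo i) (lo i) - EK n K (hi i) (hi i)
      + t • EK n K (lo i) (hi i) - t⁻¹ • EK n K (hi i) (lo i) := by
  unfold w2 x2 xm2 EK
  simp only [mul_add, add_mul, one_mul, mul_one,
    smul_mul_assoc, mul_smul_comm, smul_smul, smul_add,
    Matrix.single_mul_single_same, Matrix.single_mul_single_of_ne,
    lo_ne_hi, hi_ne_lo, ne_eq, not_false_eq_true,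
    smul_zero, mul_zero, zero_mul, one_smul]
  match_scalars <;> field_simp <;> ring

lemma wm2_eq (n : ℕ) (K : Type) [RCLike K] (i : Fin n) (t : K) (ht : t ≠ 0) :
    wm2 n K i t = 1 - EK n K (lo i) (lo i) - EK n K (hi i) (hi i)
      + t • EK n K (hi i) (lo i) - t⁻¹ • EK n K (lo i) (hi i) := by
  unfold wm2 x2 xm2 EK
  simp only [mul_add, add_mul, one_mul, mul_one,
    smul_mul_assoc, mul_smul_comm, smul_smul, smul_add,
    Matrix.single_mul_single_same, Matrix.single_mul_single_of_ne,
    lo_ne_hi, hi_ne_lo, ne_eq, not_false_eq_true,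
    smul_zero, mul_zero, zero_mul, one_smul]
  match_scalars <;> field_simp <;> ring

lemma wpp_inv (n : ℕ) (K : Type) [RCLike K] (i j : Fin n) (a : K) (ha : a ≠ 0) :
    (wpp n K i j a 0)⁻¹ = wpp n K i j (-a) 0 := by
  apply Matrix.inv_eq_right_inv
  rw [wpp_eq n K i j a ha, wpp_eq n K i j (-a) (neg_ne_zero.mpr ha)]
  unfold EK
  simp only [mul_add, add_mul, one_mul, mul_one, sub_eq_add_neg, neg_add_rev, neg_neg,
    smul_mul_assoc, mul_smul_comm, smul_smul, smul_add, smul_neg, neg_mul, mul_neg,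
    Matrix.single_mul_single_same, Matrix.single_mul_single_of_ne,
    lo_ne_hi, hi_ne_lo, ne_eq, not_false_eq_true,
    smul_zero, mul_zero, zero_mul, one_smul, neg_zero]
  match_scalars <;> field_simp <;> ring

/-- for i < j and nonzero a, t₁, t₂,
w_{L_i+L_j}(a,0) w_{L_i-L_j}(t₁,t₂) w_{L_i+L_j}(a,0)⁻¹ = w_{-2L_j}(-a⁻¹t₁) w_{2L_i}(a t₂). -/
theorem statement14 {n : ℕ} (hn : 2 ≤ n) (K : Type) [RCLike K]
    (i j : Fin n) (hij : i < j) (a t₁ t₂ : K) (ha : a ≠ 0) (h1 : t₁ ≠ 0) (h2 : t₂ ≠ 0) :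
    wpp n K i j a 0 * wpm n K i j t₁ t₂ * (wpp n K i j a 0)⁻¹
      = wm2 n K j (-(a⁻¹ * t₁)) * w2 n K i (a * t₂) := by
  have hij' : i ≠ j := hij.ne
  have d1 := lo_ne_lo hij'
  have d2 := lo_ne_lo hij'.symm
  have d3 := hi_ne_hi hij'
  have d4 := hi_ne_hi hij'.symm
  rw [wpp_inv n K i j a ha,
    wpp_eq n K i j a ha, wpp_eq n K i j (-a) (neg_ne_zero.mpr ha),
    wpm_eq n K i j hij' t₁ t₂ h1 h2,
    wm2_eq n K j _ (by simp [ha, h1]), w2_eq n K i _ (mul_ne_zero ha h2)]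
  unfold EK
  simp only [mul_add, add_mul, one_mul, mul_one, sub_eq_add_neg, neg_add_rev, neg_neg,
    smul_mul_assoc, mul_smul_comm, smul_smul, smul_add, smul_neg, neg_mul, mul_neg, neg_smul,
    Matrix.single_mul_single_same, Matrix.single_mul_single_of_ne,
    lo_ne_hi, hi_ne_lo, d1, d2, d3, d4, ne_eq, not_false_eq_true,
    smul_zero, mul_zero, zero_mul, one_smul, neg_zero]
  match_scalars <;> field_simp <;> ring

end
end

section
/- Let U⁺ denote the subgroup of SL(2n,K) generated by all x_r(t₁,t₂) with r a positive root (r ∈ Φ⁺ = {L_i−L_j (i<j), L_i+L_j (i<j), 2L_i}) and (t₁,t₂) ∈ K², and let W denote the subgroup of SL(2n,K) generated by all w_γ(t₁,t₂) (γ = ±L_i±L_j, t₁,t₂ ∈ K nonzero, including the degenerate forms w_γ(t,0), w_γ(0,t)) and all w_{±2L_i}(t) (t ∈ K nonzero). Then every element g of SL(2n,K) can be written as g = u₁·w·u₂ with u₁, u₂ ∈ U⁺ and w ∈ W. -/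
open Matrix

noncomputable section

/-- The generators of U⁺: all x_r(t₁,t₂) with r a positive root
(r ∈ Φ⁺ = {L_i−L_j (i<j), L_i+L_j (i<j), 2L_i}), viewed inside the units of the
matrix ring (so that SL(2n,K) sits inside as the units of determinant 1). -/
def genU (n : ℕ) (K : Type) [RCLike K] : Set (Matrix (Fin (2 * n)) (Fin (2 * n)) K)ˣ :=
  {u | (∃ i j : Fin n, i < j ∧ ∃ t₁ t₂ : K,
          (u : Matrix (Fin (2 * n)) (Fin (2 * n)) K) = xpm n K i j t₁ t₂
            ∨ (u : Matrix (Fin (2 * n)) (Fin (2 * n)) K) = xpp n K i j t₁ t₂)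
      ∨ (∃ i : Fin n, ∃ t : K,
          (u : Matrix (Fin (2 * n)) (Fin (2 * n)) K) = x2 n K i t)}

/-- The generators of W: all w_γ(t₁,t₂) for γ = ±L_i±L_j with t₁,t₂ nonzero,
including the degenerate forms w_γ(t,0), w_γ(0,t), and all w_{±2L_i}(t), t ≠ 0. -/
def genW (n : ℕ) (K : Type) [RCLike K] : Set (Matrix (Fin (2 * n)) (Fin (2 * n)) K)ˣ :=
  {u | (∃ i j : Fin n, i ≠ j ∧ ∃ t₁ t₂ : K, (t₁ ≠ 0 ∨ t₂ ≠ 0) ∧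
          ((u : Matrix (Fin (2 * n)) (Fin (2 * n)) K) = wpm n K i j t₁ t₂
            ∨ (i < j ∧
                ((u : Matrix (Fin (2 * n)) (Fin (2 * n)) K) = wpp n K i j t₁ t₂
                  ∨ (u : Matrix (Fin (2 * n)) (Fin (2 * n)) K) = wmm n K i j t₁ t₂))))
      ∨ (∃ i : Fin n, ∃ t : K, t ≠ 0 ∧
          ((u : Matrix (Fin (2 * n)) (Fin (2 * n)) K) = w2 n K i t
            ∨ (u : Matrix (Fin (2 * n)) (Fin (2 * n)) K) = wm2 n K i t))}


namespace S17

variable {F : Type} [Field F] {m : ℕ}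

/-- upper transvection generators -/
def Sup (m : ℕ) (F : Type) [Field F] : Set (Matrix (Fin m) (Fin m) F) :=
  {A | ∃ i j : Fin m, ∃ t : F, i < j ∧ A = Matrix.transvection i j t}

def wm (i j : Fin m) (t : F) : Matrix (Fin m) (Fin m) F :=
  Matrix.transvection i j t * Matrix.transvection j i (-t⁻¹) * Matrix.transvection i j t

def Sw (m : ℕ) (F : Type) [Field F] : Set (Matrix (Fin m) (Fin m) F) :=
  {A | ∃ i j : Fin m, ∃ t : F, i ≠ j ∧ t ≠ 0 ∧ A = wm i j t}

lemma tv_mul_neg (i j : Fin m) (h : i ≠ j) (t : F) :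
    Matrix.transvection i j t * Matrix.transvection i j (-t) = 1 := by
  rw [Matrix.transvection_mul_transvection_same _ _ h, add_neg_cancel, Matrix.transvection_zero]

lemma det_mem_Sup {X : Matrix (Fin m) (Fin m) F} (hX : X ∈ Submonoid.closure (Sup m F)) :
    X.det = 1 := by
  induction hX using Submonoid.closure_induction with
  | one => simp
  | mem x hx => obtain ⟨i, j, t, hij, rfl⟩ := hx; exact Matrix.det_transvection_of_ne _ _ hij.ne _
  | mul x y hx hy ihx ihy => rw [Matrix.det_mul, ihx, ihy, one_mul]

lemma inv_mem_Sup {X : Matrix (Fin m) (Fin m) F} (hX : X ∈ Submonoid.closure (Sup m F)) :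
    ∃ Y ∈ Submonoid.closure (Sup m F), Y * X = 1 ∧ X * Y = 1 := by
  induction hX using Submonoid.closure_induction with
  | one => exact ⟨1, one_mem _, by simp, by simp⟩
  | mem x hx =>
    obtain ⟨i, j, t, hij, rfl⟩ := hx
    exact ⟨Matrix.transvection i j (-t),
      Submonoid.subset_closure ⟨i, j, -t, hij, rfl⟩,
      by have := tv_mul_neg i j hij.ne (-t); rwa [neg_neg] at this, tv_mul_neg i j hij.ne t⟩
  | mul x y hx hy ihx ihy =>
    obtain ⟨X', hX', hX'1, hX'2⟩ := ihx
    obtain ⟨Y', hY', hY'1, hY'2⟩ := ihy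
    refine ⟨Y' * X', mul_mem hY' hX', ?_, ?_⟩
    · rw [Matrix.mul_assoc, ← Matrix.mul_assoc X', hX'1, Matrix.one_mul, hY'1]
    · rw [Matrix.mul_assoc, ← Matrix.mul_assoc y, hY'2, Matrix.one_mul, hX'2]

def colMat (k : Fin m) (c : Fin m → F) : Matrix (Fin m) (Fin m) F :=
  Matrix.of fun i j => if j = k then c i else 0

def rowMat (k : Fin m) (r : Fin m → F) : Matrix (Fin m) (Fin m) F :=
  Matrix.of fun i j => if i = k then r j else 0

lemma one_add_colMat_mul (k : Fin m) (c : Fin m → F) (M : Matrix (Fin m) (Fin m) F) :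
    (1 + colMat k c) * M = Matrix.of fun i j => M i j + c i * M k j := by
  rw [Matrix.add_mul, Matrix.one_mul]
  ext i j
  simp only [Matrix.add_apply, Matrix.of_apply, Matrix.mul_apply, colMat, ite_mul, zero_mul,
    Finset.sum_ite_eq', Finset.mem_univ, if_true]

lemma mul_one_add_rowMat (k : Fin m) (r : Fin m → F) (M : Matrix (Fin m) (Fin m) F) :
    M * (1 + rowMat k r) = Matrix.of fun i j => M i j + M i k * r j := by
  rw [Matrix.mul_add, Matrix.mul_one]
  ext i j
  simp only [Matrix.add_apply, Matrix.of_apply, Matrix.mul_apply, rowMat, mul_ite, mul_zero,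
    Finset.sum_ite_eq', Finset.mem_univ, if_true]

end S17
namespace S17
open scoped Classical
open scoped Classical
variable {F : Type} [Field F] {m : ℕ}

lemma colAdd_mem_aux (fuel : ℕ) : ∀ (k : Fin m) (c : Fin m → F),
    (Finset.univ.filter fun i => c i ≠ 0).card ≤ fuel →
    c k = 0 → (∀ i, c i ≠ 0 → i < k) →
    (1 + colMat k c) ∈ Submonoid.closure (Sup m F) := by
  classical
  induction fuel with
  | zero =>
    intro k c hcard h0 hlt
    have hz : ∀ i, c i = 0 := by
      intro i; by_contra h
      have hmem : i ∈ Finset.univ.filter fun i => c i ≠ 0 := by simp [h]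
      have := Finset.card_pos.mpr ⟨i, hmem⟩; omega
    have : colMat k c = 0 := by ext i j; simp [colMat, hz]
    rw [this, add_zero]; exact one_mem _
  | succ fuel ih =>
    intro k c hcard h0 hlt
    by_cases hc : ∀ i, c i = 0
    · have : colMat k c = 0 := by ext i j; simp [colMat, hc]
      rw [this, add_zero]; exact one_mem _
    · push_neg at hc
      obtain ⟨i0, hi0⟩ := hc
      have hi0k : i0 < k := hlt i0 hi0
      set c' : Fin m → F := Function.update c i0 0 with hc'def
      have hc'i0 : c' i0 = 0 := Function.update_self _ _ _
      have hc'ne : ∀ i, i ≠ i0 → c' i = c i := fun i hi => Function.update_of_ne hi _ _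
      have hk0 : k ≠ i0 := fun h => hi0 (h ▸ h0)
      have hcard' : (Finset.univ.filter fun i => c' i ≠ 0).card ≤ fuel := by
        have hsub : (Finset.univ.filter fun i => c' i ≠ 0) ⊆
            (Finset.univ.filter fun i => c i ≠ 0).erase i0 := by
          intro i hi
          simp only [Finset.mem_filter, Finset.mem_univ, true_and] at hi
          have hii0 : i ≠ i0 := by intro h; rw [h, hc'i0] at hi; exact hi rfl
          rw [hc'ne i hii0] at hi
          exact Finset.mem_erase.mpr ⟨hii0, by simp [hi]⟩
        have h1 := Finset.card_le_card hsub
        have h2 : i0 ∈ Finset.univ.filter fun i => c i ≠ 0 := by simp [hi0]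
        have h3 := Finset.card_erase_of_mem h2
        have h4 := Finset.card_pos.mpr ⟨i0, h2⟩
        omega
      have hmem' := ih k c' hcard' (by rw [hc'ne k hk0]; exact h0)
        (fun i hi => by
          by_cases hii0 : i = i0
          · exact absurd (hii0 ▸ hi) (by rw [hc'i0]; simp)
          · exact hlt i (by rwa [hc'ne i hii0] at hi))
      have hc'k : c' k = 0 := by rw [hc'ne k hk0]; exact h0
      have hX : ∀ a b : Fin m, ((1 : Matrix (Fin m) (Fin m) F) + colMat k c') a b
          = (if a = b then 1 else 0) + (if b = k then c' a else 0) := by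
        intro a b; simp [colMat, Matrix.one_apply]
      have hL : ∀ a b : Fin m, ((1 : Matrix (Fin m) (Fin m) F) + colMat k c) a b
          = (if a = b then 1 else 0) + (if b = k then c a else 0) := by
        intro a b; simp [colMat, Matrix.one_apply]
      have key : (1 : Matrix (Fin m) (Fin m) F) + colMat k c
          = Matrix.transvection i0 k (c i0) * (1 + colMat k c') := by
        ext a b
        by_cases ha : a = i0
        · subst ha
          rw [Matrix.transvection_mul_apply_same, hL, hX, hX, hc'i0, hc'k]
          by_cases hbk : b = k
          · subst hbk
            simp [hi0k.ne]
          · have h2 : ¬ k = b := fun h => hbk h.symm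
            simp [hbk, h2]
        · rw [Matrix.transvection_mul_apply_of_ne _ _ _ _ ha, hL, hX]
          by_cases hbk : b = k
          · subst hbk; rw [hc'ne a ha]
          · simp [hbk]
      rw [key]
      exact mul_mem (Submonoid.subset_closure ⟨i0, k, c i0, hi0k, rfl⟩) hmem'

lemma colAdd_mem (k : Fin m) (c : Fin m → F) (h0 : c k = 0) (hlt : ∀ i, c i ≠ 0 → i < k) :
    (1 + colMat k c) ∈ Submonoid.closure (Sup m F) := by
  classical
  exact colAdd_mem_aux (Finset.univ.filter fun i => c i ≠ 0).card k c le_rfl h0 hlt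

lemma rowAdd_mem_aux (fuel : ℕ) : ∀ (k : Fin m) (r : Fin m → F),
    (Finset.univ.filter fun j => r j ≠ 0).card ≤ fuel →
    r k = 0 → (∀ j, r j ≠ 0 → k < j) →
    (1 + rowMat k r) ∈ Submonoid.closure (Sup m F) := by
  classical
  induction fuel with
  | zero =>
    intro k r hcard h0 hlt
    have hz : ∀ j, r j = 0 := by
      intro j; by_contra h
      have hmem : j ∈ Finset.univ.filter fun j => r j ≠ 0 := by simp [h]
      have := Finset.card_pos.mpr ⟨j, hmem⟩; omega
    have : rowMat k r = 0 := by ext i j; simp [rowMat, hz]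
    rw [this, add_zero]; exact one_mem _
  | succ fuel ih =>
    intro k r hcard h0 hlt
    by_cases hr : ∀ j, r j = 0
    · have : rowMat k r = 0 := by ext i j; simp [rowMat, hr]
      rw [this, add_zero]; exact one_mem _
    · push_neg at hr
      obtain ⟨j0, hj0⟩ := hr
      have hkj0 : k < j0 := hlt j0 hj0
      set r' : Fin m → F := Function.update r j0 0 with hr'def
      have hr'j0 : r' j0 = 0 := Function.update_self _ _ _
      have hr'ne : ∀ j, j ≠ j0 → r' j = r j := fun j hj => Function.update_of_ne hj _ _
      have hk0 : k ≠ j0 := hkj0.ne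
      have hcard' : (Finset.univ.filter fun j => r' j ≠ 0).card ≤ fuel := by
        have hsub : (Finset.univ.filter fun j => r' j ≠ 0) ⊆
            (Finset.univ.filter fun j => r j ≠ 0).erase j0 := by
          intro j hj
          simp only [Finset.mem_filter, Finset.mem_univ, true_and] at hj
          have hjj0 : j ≠ j0 := by intro h; rw [h, hr'j0] at hj; exact hj rfl
          rw [hr'ne j hjj0] at hj
          exact Finset.mem_erase.mpr ⟨hjj0, by simp [hj]⟩
        have h1 := Finset.card_le_card hsub
        have h2 : j0 ∈ Finset.univ.filter fun j => r j ≠ 0 := by simp [hj0]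
        have h3 := Finset.card_erase_of_mem h2
        have h4 := Finset.card_pos.mpr ⟨j0, h2⟩
        omega
      have hmem' := ih k r' hcard' (by rw [hr'ne k hk0]; exact h0)
        (fun j hj => by
          by_cases hjj0 : j = j0
          · exact absurd (hjj0 ▸ hj) (by rw [hr'j0]; simp)
          · exact hlt j (by rwa [hr'ne j hjj0] at hj))
      have hr'k : r' k = 0 := by rw [hr'ne k hk0]; exact h0
      have hX : ∀ a b : Fin m, ((1 : Matrix (Fin m) (Fin m) F) + rowMat k r') a b
          = (if a = b then 1 else 0) + (if a = k then r' b else 0) := by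
        intro a b; simp [rowMat, Matrix.one_apply]
      have hL : ∀ a b : Fin m, ((1 : Matrix (Fin m) (Fin m) F) + rowMat k r) a b
          = (if a = b then 1 else 0) + (if a = k then r b else 0) := by
        intro a b; simp [rowMat, Matrix.one_apply]
      have key : (1 : Matrix (Fin m) (Fin m) F) + rowMat k r
          = (1 + rowMat k r') * Matrix.transvection k j0 (r j0) := by
        ext a b
        by_cases hb : b = j0
        · subst hb
          rw [Matrix.mul_transvection_apply_same, hL, hX, hX, hr'j0, hr'k]
          by_cases hak : a = k
          · subst hak
            simp [hkj0.ne]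
          · have h2 : ¬ k = a := fun h => hak h.symm
            simp [hak, h2]
        · rw [Matrix.mul_transvection_apply_of_ne _ _ _ _ hb, hL, hX]
          by_cases hak : a = k
          · subst hak; rw [hr'ne b hb]
          · simp [hak]
      rw [key]
      exact mul_mem hmem' (Submonoid.subset_closure ⟨k, j0, r j0, hkj0, rfl⟩)

lemma rowAdd_mem (k : Fin m) (r : Fin m → F) (h0 : r k = 0) (hlt : ∀ j, r j ≠ 0 → k < j) :
    (1 + rowMat k r) ∈ Submonoid.closure (Sup m F) := by
  classical
  exact rowAdd_mem_aux (Finset.univ.filter fun j => r j ≠ 0).card k r le_rfl h0 hlt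

end S17
namespace S17
open scoped Classical
variable {F : Type} [Field F] {m : ℕ}

/-- invariant: the first `j₀` columns are processed -/
def Inv (j₀ : ℕ) (N : Matrix (Fin m) (Fin m) F) (ρ : Fin m → Fin m) : Prop :=
  (∀ j j' : Fin m, j.1 < j₀ → j'.1 < j₀ → ρ j = ρ j' → j = j') ∧
  ∀ j : Fin m, j.1 < j₀ →
    N (ρ j) j ≠ 0 ∧ (∀ i, i ≠ ρ j → N i j = 0) ∧ (∀ j', j' ≠ j → N (ρ j) j' = 0)

lemma lemB_aux (j₀ : ℕ) : ∀ (_ : j₀ ≤ m) (M : Matrix (Fin m) (Fin m) F) (_ : M.det ≠ 0),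
    ∃ u₁ ∈ Submonoid.closure (Sup m F), ∃ u₂ ∈ Submonoid.closure (Sup m F),
      ∃ ρ : Fin m → Fin m, Inv j₀ (u₁ * M * u₂) ρ := by
  induction j₀ with
  | zero =>
    intro _ M _
    exact ⟨1, one_mem _, 1, one_mem _, id, fun j j' hj _ _ => absurd hj (Nat.not_lt_zero _),
      fun j hj => absurd hj (Nat.not_lt_zero _)⟩
  | succ j₀ ih =>
    intro hj₀ M hM
    obtain ⟨u₁, hu₁, u₂, hu₂, ρ, hinj, hclean⟩ := ih (Nat.le_of_succ_le hj₀) M hM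
    set N := u₁ * M * u₂ with hN
    have hdetN : N.det ≠ 0 := by
      rw [hN, Matrix.det_mul, Matrix.det_mul, det_mem_Sup hu₁, det_mem_Sup hu₂, one_mul, mul_one]
      exact hM
    have hjm : j₀ < m := hj₀
    set jc : Fin m := ⟨j₀, hjm⟩ with hjc
    -- pivot
    have hex : ∃ i, N i jc ≠ 0 := by
      by_contra h
      push_neg at h
      exact hdetN (Matrix.det_eq_zero_of_column_eq_zero jc h)
    obtain ⟨i1, hi1⟩ := hex
    have hne : (Finset.univ.filter fun i => N i jc ≠ 0).Nonempty := ⟨i1, by simp [hi1]⟩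
    set k : Fin m := (Finset.univ.filter fun i => N i jc ≠ 0).max' hne with hkdef
    have hk : N k jc ≠ 0 := by
      have := (Finset.univ.filter fun i => N i jc ≠ 0).max'_mem hne
      simpa using this
    have hmax : ∀ i, N i jc ≠ 0 → i ≤ k := fun i hi =>
      Finset.le_max' _ i (by simp [hi])
    set p : F := N k jc with hp
    -- processed pivot rows avoid k and have zero in column jc
    have hρjc : ∀ j : Fin m, j.1 < j₀ → N (ρ j) jc = 0 := by
      intro j hj
      refine (hclean j hj).2.2 jc ?_
      intro h
      rw [← h] at hj
      exact lt_irrefl j₀ hj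
    have hkρ : ∀ j : Fin m, j.1 < j₀ → k ≠ ρ j := by
      intro j hj h
      apply hk
      rw [hp, h]
      exact hρjc j hj
    -- the column-clearing matrix
    set c : Fin m → F := fun i => if i < k then -(N i jc) / p else 0 with hc
    have hC : (1 + colMat k c) ∈ Submonoid.closure (Sup m F) :=
      colAdd_mem k c (by simp [hc]) (fun i hi => by
        by_contra h; simp [hc, h] at hi)
    set N₂ := (1 + colMat k c) * N with hN₂def
    have hN₂ : ∀ i j, N₂ i j = N i j + c i * N k j := by
      intro i j; rw [hN₂def, one_add_colMat_mul]; rfl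
    have F1 : ∀ i, N₂ i jc = if i = k then p else 0 := by
      intro i
      rw [hN₂ i jc]
      by_cases hik : i = k
      · subst hik; simp [hc]; exact hp.symm
      · rw [if_neg hik]
        rcases lt_or_gt_of_ne hik with h | h
        · rw [hc]; simp only [if_pos h]
          field_simp
          rw [← hp]; ring
        · have h0 : N i jc = 0 := by
            by_contra hne0
            exact absurd (hmax i hne0) (not_le.mpr h)
          rw [h0, hc]; simp [not_lt.mpr h.le]
    -- the row-clearing matrix
    set r : Fin m → F := fun j => if jc < j then -(N₂ k j) / p else 0 with hr
    have hR : (1 + rowMat jc r) ∈ Submonoid.closure (Sup m F) :=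
      rowAdd_mem jc r (by simp [hr]) (fun j hj => by
        by_contra h; simp [hr, h] at hj)
    set N₃ := N₂ * (1 + rowMat jc r) with hN₃def
    have hN₃ : ∀ i j, N₃ i j = N₂ i j + N₂ i jc * r j := by
      intro i j; rw [hN₃def, mul_one_add_rowMat]; rfl
    have G1 : ∀ j : Fin m, ¬ jc < j → ∀ i, N₃ i j = N₂ i j := by
      intro j hj i
      rw [hN₃ i j, hr]; simp [hj]
    have G2 : ∀ i, N₃ i jc = if i = k then p else 0 := by
      intro i
      rw [G1 jc (lt_irrefl jc) i]; exact F1 i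
    have hprocN₂ : ∀ j : Fin m, j.1 < j₀ → ∀ i, N₂ i j = N i j := by
      intro j hj i
      rw [hN₂ i j, (hclean j hj).2.1 k (hkρ j hj), mul_zero, add_zero]
    have G3row : ∀ j : Fin m, j ≠ jc → N₃ k j = 0 := by
      intro j hjne
      rcases lt_or_gt_of_ne hjne with h | h
      · have hjlt : j.1 < j₀ := h
        rw [G1 j (not_lt.mpr h.le) k, hprocN₂ j hjlt k]
        exact (hclean j hjlt).2.1 k (hkρ j hjlt)
      · rw [hN₃ k j, F1 k, if_pos rfl, hr]
        simp only [if_pos h]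
        field_simp
        ring
    have G4 : ∀ j : Fin m, j.1 < j₀ → ∀ j', N₃ (ρ j) j' = N (ρ j) j' := by
      intro j hj j'
      rw [hN₃ (ρ j) j', F1 (ρ j), if_neg (fun h => hkρ j hj h.symm), zero_mul, add_zero,
        hN₂ (ρ j) j']
      have : c (ρ j) = 0 := by
        rw [hc]
        by_cases h : ρ j < k
        · simp only [if_pos h, hρjc j hj, neg_zero, zero_div]
        · simp [h]
      rw [this, zero_mul, add_zero]
    have G5 : ∀ j : Fin m, j.1 < j₀ → ∀ i, N₃ i j = N i j := by
      intro j hj i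
      have hnot : ¬ jc < j := by
        rw [Fin.lt_def]
        show ¬ (j₀ < j.1)
        omega
      rw [G1 j hnot i, hprocN₂ j hj i]
    -- assemble
    have hne_jc : ∀ j : Fin m, j.1 < j₀ + 1 → j ≠ jc → j.1 < j₀ := by
      intro j h1 h2
      have : j.1 ≠ j₀ := fun h => h2 (Fin.ext h)
      omega
    refine ⟨(1 + colMat k c) * u₁, mul_mem hC hu₁,
      u₂ * (1 + rowMat jc r), mul_mem hu₂ hR, Function.update ρ jc k, ?_⟩
    have hEq : (1 + colMat k c) * u₁ * M * (u₂ * (1 + rowMat jc r)) = N₃ := by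
      rw [hN₃def, hN₂def, hN]
      simp only [Matrix.mul_assoc]
    rw [hEq]
    constructor
    · intro j j' hjlt hj'lt heq
      by_cases h1 : j = jc <;> by_cases h2 : j' = jc
      · rw [h1, h2]
      · exfalso
        rw [h1, Function.update_self, Function.update_of_ne h2] at heq
        exact hkρ j' (hne_jc j' hj'lt h2) heq
      · exfalso
        rw [h2, Function.update_self, Function.update_of_ne h1] at heq
        exact hkρ j (hne_jc j hjlt h1) heq.symm
      · rw [Function.update_of_ne h1, Function.update_of_ne h2] at heq
        exact hinj j j' (hne_jc j hjlt h1) (hne_jc j' hj'lt h2) heq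
    · intro j hjlt
      by_cases h1 : j = jc
      · subst h1
        rw [Function.update_self]
        refine ⟨?_, ?_, ?_⟩
        · rw [G2 k, if_pos rfl]; exact hk
        · intro i hi; rw [G2 i, if_neg hi]
        · intro j' hj'; exact G3row j' hj'
      · have hjlt' : j.1 < j₀ := hne_jc j hjlt h1
        rw [Function.update_of_ne h1]
        obtain ⟨ha, hb, hc2⟩ := hclean j hjlt'
        refine ⟨?_, ?_, ?_⟩
        · rw [G5 j hjlt' (ρ j)]; exact ha
        · intro i hi; rw [G5 j hjlt' i]; exact hb i hi
        · intro j' hj'; rw [G4 j hjlt' j']; exact hc2 j' hj'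

lemma lemB (M : Matrix (Fin m) (Fin m) F) (hM : M.det ≠ 0) :
    ∃ u₁ ∈ Submonoid.closure (Sup m F), ∃ u₂ ∈ Submonoid.closure (Sup m F),
      ∃ τ : Equiv.Perm (Fin m), ∃ d : Fin m → F, (∀ j, d j ≠ 0) ∧
        u₁ * M * u₂ = Matrix.of fun i j => if i = τ j then d j else 0 := by
  obtain ⟨u₁, h1, u₂, h2, ρ, hinj, hclean⟩ := lemB_aux m le_rfl M hM
  have hInj : Function.Injective ρ := fun a b h => hinj a b a.isLt b.isLt h
  have hBij := Finite.injective_iff_bijective.mp hInj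
  refine ⟨u₁, h1, u₂, h2, Equiv.ofBijective ρ hBij, fun j => (u₁ * M * u₂) (ρ j) j,
    fun j => (hclean j j.isLt).1, ?_⟩
  ext i j
  simp only [Matrix.of_apply, Equiv.ofBijective_apply]
  by_cases h : i = ρ j
  · rw [if_pos h, h]
  · rw [if_neg h]; exact (hclean j j.isLt).2.1 i h

end S17
namespace S17
open scoped Classical
variable {F : Type} [Field F] {m : ℕ}

lemma tv_apply (i j : Fin m) (t : F) (a b : Fin m) :
    Matrix.transvection i j t a b
      = (if a = b then 1 else 0) + (if i = a ∧ j = b then t else 0) := by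
  simp [Matrix.transvection, Matrix.single, Matrix.one_apply]

lemma wm_apply (i j : Fin m) (h : i ≠ j) {t : F} (ht : t ≠ 0) (a b : Fin m) :
    wm i j t a b = if a = i then (if b = j then t else 0)
      else if a = j then (if b = i then -t⁻¹ else 0)
      else if a = b then 1 else 0 := by
  have h' : j ≠ i := h.symm
  rw [wm, Matrix.mul_assoc]
  by_cases hai : a = i
  · rw [hai, Matrix.transvection_mul_apply_same,
      Matrix.transvection_mul_apply_of_ne _ _ _ _ h, Matrix.transvection_mul_apply_same,
      tv_apply, tv_apply]
    by_cases hbj : b = j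
    · rw [hbj]
      simp only [h, h', if_true, if_false, eq_self_iff_true, true_and, and_true, if_neg h, if_neg h']
      field_simp
      ring
    · by_cases hbi : b = i
      · rw [hbi]
        simp only [eq_self_iff_true, true_and, and_true, if_neg h, if_neg h', if_true,
          if_neg (show ¬ j = i from h'), if_pos rfl]
        field_simp
        simp [h]
      · have e1 : ¬ i = b := fun hh => hbi hh.symm
        have e2 : ¬ j = b := fun hh => hbj hh.symm
        simp [e1, e2, h, h', hbi, hbj]
  · rw [if_neg hai]
    by_cases haj : a = j
    · rw [haj, Matrix.transvection_mul_apply_of_ne _ _ _ _ h',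
        Matrix.transvection_mul_apply_same, tv_apply, tv_apply]
      by_cases hbi : b = i
      · rw [hbi]
        simp [h, h']
      · by_cases hbj : b = j
        · rw [hbj]
          simp only [eq_self_iff_true, true_and, and_true, if_pos rfl, if_neg h, if_neg h',
            if_neg (show ¬ i = j from h)]
          field_simp
          simp
        · have e1 : ¬ i = b := fun hh => hbi hh.symm
          have e2 : ¬ j = b := fun hh => hbj hh.symm
          simp [e1, e2, h, h', hbi, hbj]
    · rw [Matrix.transvection_mul_apply_of_ne _ _ _ _ hai,
        Matrix.transvection_mul_apply_of_ne _ _ _ _ haj, tv_apply]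
      have e1 : ¬ i = a := fun hh => hai hh.symm
      simp [e1, haj]

lemma wm_mul_apply (i j : Fin m) (h : i ≠ j) {t : F} (ht : t ≠ 0)
    (M : Matrix (Fin m) (Fin m) F) (a b : Fin m) :
    (wm i j t * M) a b = if a = i then t * M j b
      else if a = j then -t⁻¹ * M i b else M a b := by
  rw [Matrix.mul_apply]
  by_cases hai : a = i
  · have hrow : ∀ l, wm i j t a l = if l = j then t else 0 := fun l => by
      rw [wm_apply i j h ht, if_pos hai]
    rw [if_pos hai]
    simp only [hrow, ite_mul, zero_mul, Finset.sum_ite_eq', Finset.mem_univ, if_true]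
  · by_cases haj : a = j
    · have hrow : ∀ l, wm i j t a l = if l = i then -t⁻¹ else 0 := fun l => by
        rw [wm_apply i j h ht, if_neg hai, if_pos haj]
      rw [if_neg hai, if_pos haj]
      simp only [hrow, ite_mul, zero_mul, Finset.sum_ite_eq', Finset.mem_univ, if_true]
    · have hrow : ∀ l, wm i j t a l = if a = l then 1 else 0 := fun l => by
        rw [wm_apply i j h ht, if_neg hai, if_neg haj]
      rw [if_neg hai, if_neg haj]
      have hstep : ∀ l, (if a = l then (1:F) else 0) * M l b = if l = a then M l b else 0 := by
        intro l
        by_cases hla : l = a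
        · rw [hla]; simp
        · rw [if_neg (fun hh => hla hh.symm), if_neg hla, zero_mul]
      simp only [hrow, hstep, Finset.sum_ite_eq', Finset.mem_univ, if_true]

lemma det_wm (i j : Fin m) (h : i ≠ j) (t : F) : (wm i j t).det = 1 := by
  rw [wm, Matrix.det_mul, Matrix.det_mul, Matrix.det_transvection_of_ne _ _ h,
    Matrix.det_transvection_of_ne _ _ h.symm]
  norm_num

lemma wm_neg_mul (i j : Fin m) (h : i ≠ j) (t : F) : wm i j (-t) * wm i j t = 1 := by
  have h1 : Matrix.transvection i j (-t) * Matrix.transvection i j t = 1 := by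
    have := tv_mul_neg i j h (-t); rwa [neg_neg] at this
  have h2 : Matrix.transvection j i (t⁻¹) * Matrix.transvection j i (-t⁻¹) = 1 :=
    tv_mul_neg j i h.symm t⁻¹
  rw [wm, wm, inv_neg, neg_neg]
  simp only [Matrix.mul_assoc]
  rw [← Matrix.mul_assoc (Matrix.transvection i j (-t)) (Matrix.transvection i j t), h1,
    Matrix.one_mul, ← Matrix.mul_assoc (Matrix.transvection j i t⁻¹), h2, Matrix.one_mul, h1]

end S17
namespace S17
open scoped Classical
variable {F : Type} [Field F] {m : ℕ}

lemma lemC_diag_aux (fuel : ℕ) : ∀ d : Fin m → F, (∏ i, d i) = 1 →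
    (Finset.univ.filter fun i => d i ≠ 1).card ≤ fuel →
    Matrix.diagonal d ∈ Submonoid.closure (Sw m F) := by
  induction fuel with
  | zero =>
    intro d hd hcard
    have hz : ∀ i, d i = 1 := by
      intro i; by_contra hne
      have hmem : i ∈ Finset.univ.filter fun i => d i ≠ 1 := by simp [hne]
      have := Finset.card_pos.mpr ⟨i, hmem⟩; omega
    have : d = fun _ => 1 := funext hz
    rw [this, Matrix.diagonal_one]
    exact one_mem _
  | succ fuel ih =>
    intro d hd hcard
    by_cases hall : ∀ i, d i = 1
    · have : d = fun _ => 1 := funext hall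
      rw [this, Matrix.diagonal_one]
      exact one_mem _
    · push_neg at hall
      obtain ⟨i0, hi0⟩ := hall
      have hj0 : ∃ j0, j0 ≠ i0 ∧ d j0 ≠ 1 := by
        by_contra hcon
        push_neg at hcon
        have : ∏ i, d i = d i0 :=
          Finset.prod_eq_single i0 (fun b _ hb => hcon b hb) (fun hni => absurd (Finset.mem_univ i0) hni)
        rw [hd] at this
        exact hi0 this.symm
      obtain ⟨j0, hj0i0, hdj0⟩ := hj0
      have hi0j0 : i0 ≠ j0 := hj0i0.symm
      have hdne : ∀ i, d i ≠ 0 := by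
        intro i hzero
        rw [Finset.prod_eq_zero (Finset.mem_univ i) hzero] at hd
        exact zero_ne_one hd
      set s : F := d i0 with hs
      set d' : Fin m → F := Function.update (Function.update d i0 1) j0 (d i0 * d j0) with hd'
      have hd'i0 : d' i0 = 1 := by
        rw [hd', Function.update_of_ne hi0j0, Function.update_self]
      have hd'j0 : d' j0 = d i0 * d j0 := by
        rw [hd', Function.update_self]
      have hd'other : ∀ i, i ≠ i0 → i ≠ j0 → d' i = d i := by
        intro i h1 h2
        rw [hd', Function.update_of_ne h2, Function.update_of_ne h1]
      have hprod' : ∏ i, d' i = 1 := by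
        have e1 : ∏ i, d' i = d' i0 * ∏ i ∈ Finset.univ.erase i0, d' i :=
          (Finset.mul_prod_erase Finset.univ d' (Finset.mem_univ i0)).symm
        have hj0mem : j0 ∈ Finset.univ.erase i0 := Finset.mem_erase.mpr ⟨hj0i0, Finset.mem_univ j0⟩
        have e2 : ∏ i ∈ Finset.univ.erase i0, d' i
            = d' j0 * ∏ i ∈ (Finset.univ.erase i0).erase j0, d' i :=
          (Finset.mul_prod_erase _ d' hj0mem).symm
        have e3 : ∏ i ∈ (Finset.univ.erase i0).erase j0, d' i
            = ∏ i ∈ (Finset.univ.erase i0).erase j0, d i := by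
          refine Finset.prod_congr rfl fun i hi => ?_
          have h1 := Finset.mem_erase.mp hi
          have h2 := Finset.mem_erase.mp h1.2
          exact hd'other i h2.1 h1.1
        have f1 : ∏ i, d i = d i0 * ∏ i ∈ Finset.univ.erase i0, d i :=
          (Finset.mul_prod_erase Finset.univ d (Finset.mem_univ i0)).symm
        have f2 : ∏ i ∈ Finset.univ.erase i0, d i
            = d j0 * ∏ i ∈ (Finset.univ.erase i0).erase j0, d i :=
          (Finset.mul_prod_erase _ d hj0mem).symm
        rw [e1, e2, e3, hd'i0, hd'j0, one_mul]
        rw [f1, f2] at hd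
        calc d i0 * d j0 * ∏ i ∈ (Finset.univ.erase i0).erase j0, d i
            = d i0 * (d j0 * ∏ i ∈ (Finset.univ.erase i0).erase j0, d i) := by ring
          _ = 1 := hd
      have hcard' : (Finset.univ.filter fun i => d' i ≠ 1).card ≤ fuel := by
        have hsub : (Finset.univ.filter fun i => d' i ≠ 1) ⊆
            (Finset.univ.filter fun i => d i ≠ 1).erase i0 := by
          intro i hi
          simp only [Finset.mem_filter, Finset.mem_univ, true_and] at hi
          have hii0 : i ≠ i0 := by
            intro hh; rw [hh, hd'i0] at hi; exact hi rfl
          refine Finset.mem_erase.mpr ⟨hii0, ?_⟩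
          simp only [Finset.mem_filter, Finset.mem_univ, true_and]
          by_cases hij0 : i = j0
          · rw [hij0]; exact hdj0
          · rw [← hd'other i hii0 hij0]; exact hi
        have h1 := Finset.card_le_card hsub
        have h2 : i0 ∈ Finset.univ.filter fun i => d i ≠ 1 := by simp [hi0]; exact hi0
        have h3 := Finset.card_erase_of_mem h2
        have h4 := Finset.card_pos.mpr ⟨i0, h2⟩
        omega
      have hs0 : s ≠ 0 := hdne i0
      -- key identity
      have hneg1 : (-1 : F) ≠ 0 := by norm_num
      have hkey : Matrix.diagonal d = wm i0 j0 s * (wm i0 j0 (-1) * Matrix.diagonal d') := by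
        set X := wm i0 j0 (-1) * Matrix.diagonal d' with hX
        have hXapp : ∀ a b, X a b = if a = i0 then -(Matrix.diagonal d' j0 b)
            else if a = j0 then Matrix.diagonal d' i0 b else Matrix.diagonal d' a b := by
          intro a b
          rw [hX, wm_mul_apply i0 j0 hi0j0 hneg1]
          simp only [inv_neg, inv_one, neg_neg, neg_one_mul, one_mul]
        ext a b
        rw [wm_mul_apply i0 j0 hi0j0 hs0]
        by_cases hai : a = i0
        · rw [if_pos hai, hXapp, if_neg (show ¬ j0 = i0 from hj0i0), if_pos rfl, hai]
          by_cases hbi : b = i0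
          · rw [hbi, Matrix.diagonal_apply_eq, Matrix.diagonal_apply_eq, hd'i0, mul_one, hs]
          · rw [Matrix.diagonal_apply_ne _ (show i0 ≠ b from fun hh => hbi hh.symm),
              Matrix.diagonal_apply_ne _ (show i0 ≠ b from fun hh => hbi hh.symm), mul_zero]
        · by_cases haj : a = j0
          · rw [if_neg hai, if_pos haj, hXapp, if_pos rfl, haj]
            by_cases hbj : b = j0
            · rw [hbj, Matrix.diagonal_apply_eq, Matrix.diagonal_apply_eq, hd'j0]
              have : -s⁻¹ * -(d i0 * d j0) = s⁻¹ * (s * d j0) := by rw [hs]; ring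
              rw [this, ← mul_assoc, inv_mul_cancel₀ hs0, one_mul]
            · rw [Matrix.diagonal_apply_ne _ (show j0 ≠ b from fun hh => hbj hh.symm),
                Matrix.diagonal_apply_ne _ (show j0 ≠ b from fun hh => hbj hh.symm)]
              simp
          · rw [if_neg hai, if_neg haj, hXapp, if_neg hai, if_neg haj]
            by_cases hab : a = b
            · rw [← hab, Matrix.diagonal_apply_eq, Matrix.diagonal_apply_eq, hd'other a hai haj]
            · rw [Matrix.diagonal_apply_ne _ hab, Matrix.diagonal_apply_ne _ hab]
      rw [hkey]
      refine mul_mem (Submonoid.subset_closure ⟨i0, j0, s, hi0j0, hs0, rfl⟩)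
        (mul_mem (Submonoid.subset_closure ⟨i0, j0, -1, hi0j0, hneg1, rfl⟩)
          (ih d' hprod' hcard'))

lemma lemC_diag (d : Fin m → F) (hd : (∏ i, d i) = 1) :
    Matrix.diagonal d ∈ Submonoid.closure (Sw m F) :=
  lemC_diag_aux (Finset.univ.filter fun i => d i ≠ 1).card d hd le_rfl

end S17
theorem Equiv.Perm.apply_inv_self {α : Type*} (f : Equiv.Perm α) (x : α) : f (f⁻¹ x) = x :=
  f.apply_symm_apply x

theorem Equiv.Perm.inv_apply_self {α : Type*} (f : Equiv.Perm α) (x : α) : f⁻¹ (f x) = x :=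
  f.symm_apply_apply x

namespace S17
open scoped Classical
variable {F : Type} [Field F] {m : ℕ}

def mono (τ : Equiv.Perm (Fin m)) (d : Fin m → F) : Matrix (Fin m) (Fin m) F :=
  Matrix.of fun i j => if i = τ j then d j else 0

lemma lemC_id (τ : Equiv.Perm (Fin m)) (d : Fin m → F) (hfix : ∀ j, τ j = j)
    (hdet : (mono τ d).det = 1) : mono τ d ∈ Submonoid.closure (Sw m F) := by
  have hdiag : mono τ d = Matrix.diagonal d := by
    ext i j
    simp only [mono, Matrix.of_apply, hfix]
    rw [Matrix.diagonal_apply]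
    by_cases hij : i = j
    · rw [hij]
    · rw [if_neg hij, if_neg hij]
  rw [hdiag]
  apply lemC_diag
  rw [← Matrix.det_diagonal, ← hdiag]
  exact hdet

lemma lemC_aux (fuel : ℕ) : ∀ (τ : Equiv.Perm (Fin m)) (d : Fin m → F), (∀ j, d j ≠ 0) →
    (Finset.univ.filter fun j => τ j ≠ j).card ≤ fuel →
    (mono τ d).det = 1 → mono τ d ∈ Submonoid.closure (Sw m F) := by
  induction fuel with
  | zero =>
    intro τ d hd hcard hdet
    refine lemC_id τ d (fun j => ?_) hdet
    by_contra hne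
    have hmem : j ∈ Finset.univ.filter fun j => τ j ≠ j := by simp [hne]
    have := Finset.card_pos.mpr ⟨j, hmem⟩; omega
  | succ fuel ih =>
    intro τ d hd hcard hdet
    by_cases hfixall : ∀ j, τ j = j
    · exact lemC_id τ d hfixall hdet
    · push_neg at hfixall
      obtain ⟨j0, hj0⟩ := hfixall
      have hkl : τ j0 ≠ j0 := hj0
      have hinvne : τ⁻¹ j0 ≠ j0 := by
        intro h
        have := congrArg τ h
        rw [Equiv.Perm.apply_inv_self] at this
        exact hj0 this.symm
      set τ' : Equiv.Perm (Fin m) := τ * Equiv.swap j0 (τ⁻¹ j0) with hτ'def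
      have hτ'j0 : τ' j0 = j0 := by
        rw [hτ'def, Equiv.Perm.mul_apply, Equiv.swap_apply_left, Equiv.Perm.apply_inv_self]
      have hτ'inv : τ' (τ⁻¹ j0) = τ j0 := by
        rw [hτ'def, Equiv.Perm.mul_apply, Equiv.swap_apply_right]
      have hτ'other : ∀ x, x ≠ j0 → x ≠ τ⁻¹ j0 → τ' x = τ x := by
        intro x h1 h2
        rw [hτ'def, Equiv.Perm.mul_apply, Equiv.swap_apply_of_ne_of_ne h1 h2]
      set d' : Fin m → F := fun j => if j = j0 then -d j0 else d j with hd'def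
      have hd'ne : ∀ j, d' j ≠ 0 := by
        intro j
        rw [hd'def]
        by_cases hjj : j = j0
        · simp [hjj, neg_ne_zero, hd j0]
        · simp [hjj, hd j]
      have hd'j0 : d' j0 = -d j0 := by rw [hd'def]; simp
      have hd'other : ∀ j, j ≠ j0 → d' j = d j := by
        intro j hjj; rw [hd'def]; simp [hjj]
      have hM' : wm (τ j0) j0 1 * mono τ d = mono τ' d' := by
        ext a b
        rw [wm_mul_apply (τ j0) j0 hkl one_ne_zero]
        simp only [mono, Matrix.of_apply, one_mul, inv_one]
        by_cases hb1 : b = j0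
        · rw [hb1, hτ'j0, hd'j0]
          by_cases ha1 : a = τ j0
          · rw [if_pos ha1, if_neg (show ¬ j0 = τ j0 from fun hh => hj0 hh.symm),
              if_neg (show ¬ a = j0 from by rw [ha1]; exact hj0)]
          · rw [if_neg ha1]
            by_cases ha2 : a = j0
            · rw [if_pos ha2, if_pos rfl, if_pos ha2]
              ring
            · rw [if_neg ha2, if_neg ha1, if_neg ha2]
        · by_cases hb2 : b = τ⁻¹ j0
          · rw [hb2, hτ'inv, hd'other _ (hb2 ▸ hb1 : τ⁻¹ j0 ≠ j0)]
            have hτb : τ (τ⁻¹ j0) = j0 := Equiv.Perm.apply_inv_self τ j0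
            by_cases ha1 : a = τ j0
            · rw [if_pos ha1, if_pos ha1, hτb, if_pos rfl]
            · rw [if_neg ha1]
              by_cases ha2 : a = j0
              · rw [if_pos ha2, hτb, if_neg (show ¬ τ j0 = j0 from hj0), if_neg ha1]
                ring
              · rw [hτb, if_neg ha2, if_neg ha2, if_neg ha1]
          · have hτ'b : τ' b = τ b := hτ'other b hb1 hb2
            have hτbj0 : τ b ≠ j0 := by
              intro hh
              exact hb2 (by rw [← hh, Equiv.Perm.inv_apply_self])
            have hτbk : τ b ≠ τ j0 := fun hh => hb1 (τ.injective hh)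
            rw [hτ'b, hd'other b hb1]
            by_cases ha1 : a = τ j0
            · rw [if_pos ha1, if_neg (show ¬ j0 = τ b from fun hh => hτbj0 hh.symm),
                if_neg (show ¬ a = τ b from by rw [ha1]; exact fun hh => hτbk hh.symm)]
            · rw [if_neg ha1]
              by_cases ha2 : a = j0
              · rw [if_pos ha2, if_neg (show ¬ τ j0 = τ b from fun hh => hτbk hh.symm),
                  if_neg (show ¬ a = τ b from by rw [ha2]; exact fun hh => hτbj0 hh.symm)]
                ring
              · rw [if_neg ha2]
      have hMeq : mono τ d = wm (τ j0) j0 (-1) * mono τ' d' := by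
        have h1 := wm_neg_mul (τ j0) j0 hkl (1 : F)
        calc mono τ d = 1 * mono τ d := (Matrix.one_mul _).symm
          _ = wm (τ j0) j0 (-1) * wm (τ j0) j0 1 * mono τ d := by rw [h1]
          _ = wm (τ j0) j0 (-1) * (wm (τ j0) j0 1 * mono τ d) := Matrix.mul_assoc _ _ _
          _ = wm (τ j0) j0 (-1) * mono τ' d' := by rw [hM']
      have hdet' : (mono τ' d').det = 1 := by
        rw [← hM', Matrix.det_mul, det_wm _ _ hkl, one_mul, hdet]
      have hcard' : (Finset.univ.filter fun j => τ' j ≠ j).card ≤ fuel := by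
        have hsub : (Finset.univ.filter fun j => τ' j ≠ j) ⊆
            (Finset.univ.filter fun j => τ j ≠ j).erase j0 := by
          intro i hi
          simp only [Finset.mem_filter, Finset.mem_univ, true_and] at hi
          have hij0 : i ≠ j0 := by
            intro hh; rw [hh, hτ'j0] at hi; exact hi rfl
          refine Finset.mem_erase.mpr ⟨hij0, ?_⟩
          simp only [Finset.mem_filter, Finset.mem_univ, true_and]
          by_cases hiinv : i = τ⁻¹ j0
          · rw [hiinv, Equiv.Perm.apply_inv_self]
            exact fun hh => hinvne hh.symm
          · rw [← hτ'other i hij0 hiinv]; exact hi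
        have h1 := Finset.card_le_card hsub
        have h2 : j0 ∈ Finset.univ.filter fun j => τ j ≠ j := by simp [hj0]
        have h3 := Finset.card_erase_of_mem h2
        have h4 := Finset.card_pos.mpr ⟨j0, h2⟩
        omega
      rw [hMeq]
      exact mul_mem (Submonoid.subset_closure ⟨τ j0, j0, -1, hkl, by norm_num, rfl⟩)
        (ih τ' d' hd'ne hcard' hdet')

lemma lemC (τ : Equiv.Perm (Fin m)) (d : Fin m → F) (hd : ∀ j, d j ≠ 0)
    (hdet : (mono τ d).det = 1) : mono τ d ∈ Submonoid.closure (Sw m F) :=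
  lemC_aux (Finset.univ.filter fun j => τ j ≠ j).card τ d hd le_rfl hdet

end S17

namespace S17
variable {n : ℕ} {K : Type} [RCLike K]

lemma xpm_t0 (i j : Fin n) (t : K) :
    xpm n K i j t 0 = Matrix.transvection (lo i) (lo j) t := by
  simp [xpm, EK, Matrix.transvection, Matrix.smul_single, smul_eq_mul]

lemma xpm_0t (i j : Fin n) (t : K) :
    xpm n K i j 0 t = Matrix.transvection (hi j) (hi i) t := by
  simp [xpm, EK, Matrix.transvection, Matrix.smul_single, smul_eq_mul]

lemma xpp_t0 (i j : Fin n) (t : K) :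
    xpp n K i j t 0 = Matrix.transvection (lo i) (hi j) t := by
  simp [xpp, EK, Matrix.transvection, Matrix.smul_single, smul_eq_mul]

lemma xpp_0t (i j : Fin n) (t : K) :
    xpp n K i j 0 t = Matrix.transvection (lo j) (hi i) t := by
  simp [xpp, EK, Matrix.transvection, Matrix.smul_single, smul_eq_mul]

lemma xmm_t0 (i j : Fin n) (t : K) :
    xmm n K i j t 0 = Matrix.transvection (hi j) (lo i) t := by
  simp [xmm, EK, Matrix.transvection, Matrix.smul_single, smul_eq_mul]

lemma xmm_0t (i j : Fin n) (t : K) :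
    xmm n K i j 0 t = Matrix.transvection (hi i) (lo j) t := by
  simp [xmm, EK, Matrix.transvection, Matrix.smul_single, smul_eq_mul]

lemma x2_t (i : Fin n) (t : K) :
    x2 n K i t = Matrix.transvection (lo i) (hi i) t := by
  simp [x2, EK, Matrix.transvection, Matrix.smul_single, smul_eq_mul]

lemma xm2_t (i : Fin n) (t : K) :
    xm2 n K i t = Matrix.transvection (hi i) (lo i) t := by
  simp [xm2, EK, Matrix.transvection, Matrix.smul_single, smul_eq_mul]

lemma wpm_t0 (i j : Fin n) (t : K) : wpm n K i j t 0 = wm (lo i) (lo j) t := by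
  rw [wpm, show -(0:K)⁻¹ = 0 from by simp, xpm_t0, xpm_t0, wm]

lemma wpm_0t (i j : Fin n) (t : K) : wpm n K i j 0 t = wm (hi j) (hi i) t := by
  rw [wpm, show -(0:K)⁻¹ = 0 from by simp, xpm_0t, xpm_0t, wm]

lemma wpp_t0 (i j : Fin n) (t : K) : wpp n K i j t 0 = wm (lo i) (hi j) t := by
  rw [wpp, show -(0:K)⁻¹ = 0 from by simp, xpp_t0, xmm_t0, wm]

lemma wpp_0t (i j : Fin n) (t : K) : wpp n K i j 0 t = wm (lo j) (hi i) t := by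
  rw [wpp, show -(0:K)⁻¹ = 0 from by simp, xpp_0t, xmm_0t, wm]

lemma wmm_t0 (i j : Fin n) (t : K) : wmm n K i j t 0 = wm (hi j) (lo i) t := by
  rw [wmm, show -(0:K)⁻¹ = 0 from by simp, xmm_t0, xpp_t0, wm]

lemma wmm_0t (i j : Fin n) (t : K) : wmm n K i j 0 t = wm (hi i) (lo j) t := by
  rw [wmm, show -(0:K)⁻¹ = 0 from by simp, xmm_0t, xpp_0t, wm]

lemma w2_t (i : Fin n) (t : K) : w2 n K i t = wm (lo i) (hi i) t := by
  rw [w2, x2_t, xm2_t, wm]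

lemma wm2_t (i : Fin n) (t : K) : wm2 n K i t = wm (hi i) (lo i) t := by
  rw [wm2, xm2_t, x2_t, wm]

/-- the reversal of the upper half -/
def piFun (n : ℕ) (i : Fin (2*n)) : Fin (2*n) :=
  if h : i.1 < n then i else ⟨3*n - 1 - i.1, by have := i.isLt; omega⟩

lemma piFun_invol (n : ℕ) : Function.Involutive (piFun n) := by
  intro i
  have hlt := i.isLt
  by_cases h : i.1 < n
  · have e1 : piFun n i = i := by rw [piFun, dif_pos h]
    rw [e1, e1]
  · have e1 : piFun n i = ⟨3*n - 1 - i.1, by omega⟩ := by rw [piFun, dif_neg h]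
    rw [e1, piFun, dif_neg (show ¬ (3*n - 1 - i.1 < n) from by omega)]
    exact Fin.ext (by simp only; omega)

def piPerm (n : ℕ) : Equiv.Perm (Fin (2*n)) := (piFun_invol n).toPerm

lemma piPerm_apply (i : Fin (2*n)) : piPerm n i = piFun n i := rfl

lemma piPerm_lt {i : Fin (2*n)} (h : i.1 < n) : piPerm n i = i := by
  rw [piPerm_apply, piFun, dif_pos h]

lemma piPerm_ge {i : Fin (2*n)} (h : ¬ i.1 < n) : (piPerm n i).1 = 3*n - 1 - i.1 := by
  rw [piPerm_apply, piFun, dif_neg h]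

end S17

namespace S17
variable {n : ℕ} {K : Type} [RCLike K]

lemma genU_cover (k l : Fin (2*n)) (t : K)
    (hpos : (k.1 < n ∧ l.1 < n ∧ k < l) ∨ (k.1 < n ∧ n ≤ l.1) ∨ (n ≤ k.1 ∧ n ≤ l.1 ∧ l < k)) :
    ∃ u ∈ genU n K, (u : Matrix (Fin (2*n)) (Fin (2*n)) K) = Matrix.transvection k l t := by
  have hkl : k ≠ l := by
    rcases hpos with ⟨_,_,h⟩|⟨h1,h2⟩|⟨_,_,h⟩
    · exact h.ne
    · intro hh; rw [hh] at h1; omega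
    · exact h.ne'
  refine ⟨⟨Matrix.transvection k l t, Matrix.transvection k l (-t), tv_mul_neg k l hkl t,
    by have := tv_mul_neg k l hkl (-t); rwa [neg_neg] at this⟩, ?_, rfl⟩
  rcases hpos with ⟨h1,h2,h3⟩|⟨h1,h2⟩|⟨h1,h2,h3⟩
  · have e1 : lo (⟨k.1, h1⟩ : Fin n) = k := Fin.ext rfl
    have e2 : lo (⟨l.1, h2⟩ : Fin n) = l := Fin.ext rfl
    exact Or.inl ⟨⟨k.1, h1⟩, ⟨l.1, h2⟩, Fin.mk_lt_mk.mpr h3, t, 0,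
      Or.inl (by rw [xpm_t0, e1, e2])⟩
  · have hl2 := l.isLt
    set a : Fin n := ⟨k.1, h1⟩ with ha
    set b : Fin n := ⟨l.1 - n, by omega⟩ with hb
    have e1 : lo a = k := Fin.ext rfl
    have e2 : hi b = l := Fin.ext (by show n + (l.1 - n) = l.1; omega)
    rcases lt_trichotomy a b with h|h|h
    · exact Or.inl ⟨a, b, h, t, 0, Or.inr (by rw [xpp_t0, e1, e2])⟩
    · refine Or.inr ⟨a, t, ?_⟩
      have e3 : hi a = l := by rw [h]; exact e2
      rw [x2_t, e1, e3]
    · exact Or.inl ⟨b, a, h, 0, t, Or.inr (by rw [xpp_0t, e1, e2])⟩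
  · have hk2 := k.isLt
    have hl2 := l.isLt
    set i : Fin n := ⟨l.1 - n, by omega⟩ with hidef
    set j : Fin n := ⟨k.1 - n, by omega⟩ with hjdef
    have e1 : hi j = k := Fin.ext (by show n + (k.1 - n) = k.1; omega)
    have e2 : hi i = l := Fin.ext (by show n + (l.1 - n) = l.1; omega)
    have hij : i < j := Fin.mk_lt_mk.mpr (by have := Fin.lt_def.mp h3; omega)
    exact Or.inl ⟨i, j, hij, 0, t, Or.inl (by rw [xpm_0t, e1, e2])⟩

lemma genW_cover (k l : Fin (2*n)) (hkl : k ≠ l) {t : K} (ht : t ≠ 0) :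
    ∃ u ∈ genW n K, (u : Matrix (Fin (2*n)) (Fin (2*n)) K) = wm k l t := by
  refine ⟨⟨wm k l t, wm k l (-t),
    by have := wm_neg_mul k l hkl (-t); rwa [neg_neg] at this,
    wm_neg_mul k l hkl t⟩, ?_, rfl⟩
  by_cases hk1 : k.1 < n
  · by_cases hl1 : l.1 < n
    · have hne : (⟨k.1, hk1⟩ : Fin n) ≠ ⟨l.1, hl1⟩ := by
        intro hh
        have hval : (⟨k.1, hk1⟩ : Fin n).val = (⟨l.1, hl1⟩ : Fin n).val := congrArg Fin.val hh
        exact hkl (Fin.ext hval)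
      have e1 : lo (⟨k.1, hk1⟩ : Fin n) = k := Fin.ext rfl
      have e2 : lo (⟨l.1, hl1⟩ : Fin n) = l := Fin.ext rfl
      exact Or.inl ⟨⟨k.1,hk1⟩, ⟨l.1,hl1⟩, hne, t, 0,
        ⟨Or.inl ht, Or.inl (by rw [wpm_t0, e1, e2])⟩⟩
    · push_neg at hl1
      have hl2 := l.isLt
      set a : Fin n := ⟨k.1, hk1⟩ with ha
      set b : Fin n := ⟨l.1 - n, by omega⟩ with hb
      have e1 : lo a = k := Fin.ext rfl
      have e2 : hi b = l := Fin.ext (by show n + (l.1 - n) = l.1; omega)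
      rcases lt_trichotomy a b with h|h|h
      · exact Or.inl ⟨a, b, h.ne, t, 0,
          ⟨Or.inl ht, Or.inr ⟨h, Or.inl (by rw [wpp_t0, e1, e2])⟩⟩⟩
      · refine Or.inr ⟨a, t, ht, Or.inl ?_⟩
        have e3 : hi a = l := by rw [h]; exact e2
        rw [w2_t, e1, e3]
      · exact Or.inl ⟨b, a, h.ne, 0, t,
          ⟨Or.inr ht, Or.inr ⟨h, Or.inl (by rw [wpp_0t, e1, e2])⟩⟩⟩
  · push_neg at hk1
    have hk2 := k.isLt
    by_cases hl1 : l.1 < n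
    · set a : Fin n := ⟨l.1, hl1⟩ with ha
      set b : Fin n := ⟨k.1 - n, by omega⟩ with hb
      have e1 : lo a = l := Fin.ext rfl
      have e2 : hi b = k := Fin.ext (by show n + (k.1 - n) = k.1; omega)
      rcases lt_trichotomy a b with h|h|h
      · exact Or.inl ⟨a, b, h.ne, t, 0,
          ⟨Or.inl ht, Or.inr ⟨h, Or.inr (by rw [wmm_t0, e1, e2])⟩⟩⟩
      · refine Or.inr ⟨a, t, ht, Or.inr ?_⟩
        have e3 : hi a = k := by rw [h]; exact e2
        rw [wm2_t, e1, e3]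
      · exact Or.inl ⟨b, a, h.ne, 0, t,
          ⟨Or.inr ht, Or.inr ⟨h, Or.inr (by rw [wmm_0t, e1, e2])⟩⟩⟩
    · push_neg at hl1
      have hl2 := l.isLt
      set i' : Fin n := ⟨l.1 - n, by omega⟩ with hi'
      set j' : Fin n := ⟨k.1 - n, by omega⟩ with hj'
      have e1 : hi j' = k := Fin.ext (by show n + (k.1 - n) = k.1; omega)
      have e2 : hi i' = l := Fin.ext (by show n + (l.1 - n) = l.1; omega)
      have hne : i' ≠ j' := by
        intro hh
        apply hkl
        rw [← e1, ← e2, hh]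
      exact Or.inl ⟨i', j', hne, 0, t, ⟨Or.inr ht, Or.inl (by rw [wpm_0t, e1, e2])⟩⟩

lemma pi_pos {i j : Fin (2*n)} (hij : i < j) :
    ((piPerm n i).1 < n ∧ (piPerm n j).1 < n ∧ piPerm n i < piPerm n j)
    ∨ ((piPerm n i).1 < n ∧ n ≤ (piPerm n j).1)
    ∨ (n ≤ (piPerm n i).1 ∧ n ≤ (piPerm n j).1 ∧ piPerm n j < piPerm n i) := by
  have hi2 := i.isLt
  have hj2 := j.isLt
  have hij' : i.1 < j.1 := hij
  by_cases h1 : i.1 < n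
  · by_cases h2 : j.1 < n
    · rw [piPerm_lt h1, piPerm_lt h2]
      exact Or.inl ⟨h1, h2, hij⟩
    · rw [piPerm_lt h1]
      refine Or.inr (Or.inl ⟨h1, ?_⟩)
      rw [piPerm_ge h2]; omega
  · have h2 : ¬ j.1 < n := by omega
    refine Or.inr (Or.inr ⟨?_, ?_, ?_⟩)
    · rw [piPerm_ge h1]; omega
    · rw [piPerm_ge h2]; omega
    · rw [Fin.lt_def, piPerm_ge h1, piPerm_ge h2]; omega

lemma conjP_tv (i j : Fin (2*n)) (t : K) :
    (Matrix.transvection i j t).submatrix (piPerm n) (piPerm n)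
      = Matrix.transvection (piPerm n i) (piPerm n j) t := by
  have hinv : ∀ x : Fin (2*n), piPerm n (piPerm n x) = x := piFun_invol n
  ext a b
  rw [Matrix.submatrix_apply, tv_apply, tv_apply]
  have key1 : (piPerm n a = piPerm n b) = (a = b) := propext ((piPerm n).apply_eq_iff_eq)
  have key2 : (i = piPerm n a) = (piPerm n i = a) :=
    propext ⟨fun h => by rw [h, hinv], fun h => by rw [← h, hinv]⟩
  have key3 : (j = piPerm n b) = (piPerm n j = b) :=
    propext ⟨fun h => by rw [h, hinv], fun h => by rw [← h, hinv]⟩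
  simp only [key1, key2, key3]

lemma conjP_wm (k l : Fin (2*n)) (t : K) :
    (wm k l t).submatrix (piPerm n) (piPerm n) = wm (piPerm n k) (piPerm n l) t := by
  have hmul : ∀ A B : Matrix (Fin (2*n)) (Fin (2*n)) K,
      (A * B).submatrix (piPerm n) (piPerm n)
        = A.submatrix (piPerm n) (piPerm n) * B.submatrix (piPerm n) (piPerm n) :=
    fun A B => (Matrix.submatrix_mul_equiv A B _ (piPerm n) _).symm
  rw [wm, hmul, hmul, conjP_tv, conjP_tv, wm]

lemma liftU {X : Matrix (Fin (2*n)) (Fin (2*n)) K}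
    (hX : X ∈ Submonoid.closure (Sup (2*n) K)) :
    ∃ U ∈ Subgroup.closure (genU n K),
      (U : Matrix (Fin (2*n)) (Fin (2*n)) K) = X.submatrix (piPerm n) (piPerm n) := by
  induction hX using Submonoid.closure_induction with
  | one => exact ⟨1, one_mem _, by rw [Units.val_one, Matrix.submatrix_one_equiv]⟩
  | mem x hx =>
    obtain ⟨i, j, t, hij, rfl⟩ := hx
    obtain ⟨u, hu, huval⟩ := genU_cover (piPerm n i) (piPerm n j) t (pi_pos hij)
    exact ⟨u, Subgroup.subset_closure hu, by rw [huval, conjP_tv]⟩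
  | mul x y hx hy ihx ihy =>
    obtain ⟨U₁, hU₁, h1⟩ := ihx
    obtain ⟨U₂, hU₂, h2⟩ := ihy
    exact ⟨U₁ * U₂, mul_mem hU₁ hU₂,
      by rw [Units.val_mul, h1, h2, Matrix.submatrix_mul_equiv x y _ (piPerm n) _]⟩

lemma liftW {X : Matrix (Fin (2*n)) (Fin (2*n)) K}
    (hX : X ∈ Submonoid.closure (Sw (2*n) K)) :
    ∃ W ∈ Subgroup.closure (genW n K),
      (W : Matrix (Fin (2*n)) (Fin (2*n)) K) = X.submatrix (piPerm n) (piPerm n) := by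
  induction hX using Submonoid.closure_induction with
  | one => exact ⟨1, one_mem _, by rw [Units.val_one, Matrix.submatrix_one_equiv]⟩
  | mem x hx =>
    obtain ⟨i, j, t, hij, ht, rfl⟩ := hx
    obtain ⟨u, hu, huval⟩ := genW_cover (piPerm n i) (piPerm n j) ((piPerm n).injective.ne hij) ht
    exact ⟨u, Subgroup.subset_closure hu, by rw [huval, conjP_wm]⟩
  | mul x y hx hy ihx ihy =>
    obtain ⟨W₁, hW₁, h1⟩ := ihx
    obtain ⟨W₂, hW₂, h2⟩ := ihy
    exact ⟨W₁ * W₂, mul_mem hW₁ hW₂,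
      by rw [Units.val_mul, h1, h2, Matrix.submatrix_mul_equiv x y _ (piPerm n) _]⟩

end S17

/-- every g ∈ SL(2n,K) can be written as g = u₁ · w · u₂ with
u₁, u₂ in the subgroup U⁺ generated by the positive-root unipotents and w in the
subgroup W generated by the w's. -/
theorem statement17 {n : ℕ} (hn : 2 ≤ n) (K : Type) [RCLike K]
    (g : (Matrix (Fin (2 * n)) (Fin (2 * n)) K)ˣ)
    (hg : Matrix.det (g : Matrix (Fin (2 * n)) (Fin (2 * n)) K) = 1) :
    ∃ u₁ ∈ Subgroup.closure (genU n K), ∃ w ∈ Subgroup.closure (genW n K),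
      ∃ u₂ ∈ Subgroup.closure (genU n K), g = u₁ * w * u₂ := by
  classical
  have hdet : (((g : Matrix (Fin (2 * n)) (Fin (2 * n)) K)).submatrix
      (S17.piPerm n) (S17.piPerm n)).det ≠ 0 := by
    rw [Matrix.det_submatrix_equiv_self, hg]
    exact one_ne_zero
  obtain ⟨u₁, hu₁, u₂, hu₂, τ, d, hd, hfact⟩ :=
    S17.lemB (((g : Matrix (Fin (2 * n)) (Fin (2 * n)) K)).submatrix
      (S17.piPerm n) (S17.piPerm n)) hdet
  have hfact' : u₁ * ((g : Matrix (Fin (2 * n)) (Fin (2 * n)) K)).submatrix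
      (S17.piPerm n) (S17.piPerm n) * u₂ = S17.mono τ d := hfact
  have hdet1 : (S17.mono τ d).det = 1 := by
    rw [← hfact', Matrix.det_mul, Matrix.det_mul, S17.det_mem_Sup hu₁, S17.det_mem_Sup hu₂,
      Matrix.det_submatrix_equiv_self, hg, one_mul, mul_one]
  have hw := S17.lemC τ d hd hdet1
  obtain ⟨v₁, hv₁, hv₁l, hv₁r⟩ := S17.inv_mem_Sup hu₁
  obtain ⟨v₂, hv₂, hv₂l, hv₂r⟩ := S17.inv_mem_Sup hu₂
  have hgψ : ((g : Matrix (Fin (2 * n)) (Fin (2 * n)) K)).submatrix (S17.piPerm n) (S17.piPerm n)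
      = v₁ * S17.mono τ d * v₂ := by
    rw [← hfact']
    have hassoc : v₁ * (u₁ * ((g : Matrix (Fin (2 * n)) (Fin (2 * n)) K)).submatrix
        (S17.piPerm n) (S17.piPerm n) * u₂) * v₂
        = (v₁ * u₁) * ((g : Matrix (Fin (2 * n)) (Fin (2 * n)) K)).submatrix
          (S17.piPerm n) (S17.piPerm n) * (u₂ * v₂) := by
      simp only [Matrix.mul_assoc]
    rw [hassoc, hv₁l, hv₂r, Matrix.one_mul, Matrix.mul_one]
  obtain ⟨U₁, hU₁, hU₁v⟩ := S17.liftU hv₁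
  obtain ⟨W, hW, hWv⟩ := S17.liftW hw
  obtain ⟨U₂, hU₂, hU₂v⟩ := S17.liftU hv₂
  refine ⟨U₁, hU₁, W, hW, U₂, hU₂, ?_⟩
  apply Units.ext
  rw [Units.val_mul, Units.val_mul, hU₁v, hU₂v, hWv,
    Matrix.submatrix_mul_equiv v₁ (S17.mono τ d) _ (S17.piPerm n) _,
    Matrix.submatrix_mul_equiv _ v₂ _ (S17.piPerm n) _, ← hgψ, Matrix.submatrix_submatrix]
  have hid : (⇑(S17.piPerm n) ∘ ⇑(S17.piPerm n)) = id := funext (S17.piFun_invol n)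
  rw [hid, Matrix.submatrix_id_id]

end
end
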